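/- Let X be a (λ,k,E,C,θ,L)-coarsely convex space and γ, η ∈ L̄ good quasi-geodesics with γ(0) = η(0). Set k₁ = λ+k, D = 2(1+E)k₁+C, θ̃(t) = θ(t+1)+1. Then for all a ∈ Dom γ, b ∈ Dom η and 0 ≤ t ≤ min{a,b}: d(γ(t), η(t)) ≤ E(d(γ(a), η(b)) + λ·θ̃(d(γ(a),η(b))) + k₁) + D. -/

import Mathlib

/-- (Lemma `t-ab`) For good quasi-geodesics `γ, η` of a coarsely convex space with
`γ(0) = η(0)` (modelled abstractly via the coarse convexity inequality, the
reparametrization bound and the quasi-geodesic upper bound, domains closed under scaling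
by `c ∈ [0,1]`), for all `a ∈ Dom γ`, `b ∈ Dom η` and `0 ≤ t ≤ min a b`:
`d(γ(t), η(t)) ≤ E(d(γ(a), η(b)) + λ·θ̃(d(γ(a), η(b))) + k₁) + D`. -/
theorem stmt_16 {X : Type*} [MetricSpace X]
    (lam k₁ E D : ℝ) (hlam : 1 ≤ lam) (hk₁ : 0 ≤ k₁) (hE : 1 ≤ E) (hD : 0 ≤ D)
    (θt : ℝ → ℝ) (hθmono : Monotone θt) (hθ0 : ∀ s, 0 ≤ θt s)
    (γ η : ℝ → X) (Dγ Dη : Set ℝ)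
    (hD0 : (0:ℝ) ∈ Dγ) (hD0' : (0:ℝ) ∈ Dη)
    (hsub : Dγ ⊆ Set.Ici 0) (hsub' : Dη ⊆ Set.Ici 0)
    (hscale : ∀ t ∈ Dγ, ∀ c ∈ Set.Icc (0:ℝ) 1, c * t ∈ Dγ)
    (hscale' : ∀ t ∈ Dη, ∀ c ∈ Set.Icc (0:ℝ) 1, c * t ∈ Dη)
    (hsame : γ 0 = η 0)
    (hqg : ∀ s ∈ Dγ, ∀ t ∈ Dγ, dist (γ s) (γ t) ≤ lam * |s - t| + k₁)
    (hqg' : ∀ s ∈ Dη, ∀ t ∈ Dη, dist (η s) (η t) ≤ lam * |s - t| + k₁)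
    (hconv : ∀ t ∈ Dγ, ∀ s ∈ Dη, ∀ c ∈ Set.Icc (0:ℝ) 1,
      dist (γ (c * t)) (η (c * s)) ≤
        c * E * dist (γ t) (η s) + (1 - c) * E * dist (γ 0) (η 0) + D)
    (hreparam : ∀ t ∈ Dγ, ∀ s ∈ Dη,
      |t - s| ≤ θt (dist (γ 0) (η 0) + dist (γ t) (η s)))
    (a b t : ℝ) (ha : a ∈ Dγ) (hb : b ∈ Dη)
    (htγ : t ∈ Dγ) (htη : t ∈ Dη) (ht0 : 0 ≤ t) (htm : t ≤ min a b) :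
    dist (γ t) (η t) ≤
      E * (dist (γ a) (η b) + lam * θt (dist (γ a) (η b)) + k₁) + D := by
  have hd0 : dist (γ 0) (η 0) = 0 := by rw [hsame, dist_self]
  rcases eq_or_lt_of_le (Set.mem_Ici.mp (hsub ha)) with h0 | hapos
  · -- a = 0, hence t = 0
    have ha0 : a = 0 := h0.symm
    have ht : t = 0 := le_antisymm (htm.trans (by rw [ha0] at *; exact min_le_left 0 b)) ht0
    rw [ht, hd0]
    have h1 : 0 ≤ dist (γ a) (η b) := dist_nonneg
    have h2 : 0 ≤ θt (dist (γ a) (η b)) := hθ0 _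
    have hlam0 : (0:ℝ) ≤ lam := le_trans zero_le_one hlam
    nlinarith [mul_nonneg hlam0 h2, mul_nonneg (le_trans zero_le_one hE) (add_nonneg (add_nonneg h1 (mul_nonneg hlam0 h2)) hk₁)]
  · set c := t / a with hc
    have hta : t ≤ a := htm.trans (min_le_left a b)
    have hcmem : c ∈ Set.Icc (0:ℝ) 1 :=
      ⟨div_nonneg ht0 hapos.le, (div_le_one hapos).2 hta⟩
    have hca : c * a = t := div_mul_cancel₀ t hapos.ne'
    have hcb : c * b ∈ Dη := hscale' b hb c hcmem
    have h1 := hconv a ha b hb c hcmem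
    rw [hca, hd0] at h1
    have h2 := hqg' (c * b) hcb t htη
    have h3 := hreparam a ha b hb
    rw [hd0, zero_add] at h3
    have habs : |c * b - t| ≤ |a - b| := by
      rw [← hca]
      have : c * b - c * a = c * (b - a) := by ring
      rw [this, abs_mul, abs_of_nonneg hcmem.1, abs_sub_comm]
      nlinarith [abs_nonneg (a - b), hcmem.2]
    have htri := dist_triangle (γ t) (η (c * b)) (η t)
    have hd : 0 ≤ dist (γ a) (η b) := dist_nonneg
    have hθ : 0 ≤ θt (dist (γ a) (η b)) := hθ0 _
    have hlam0 : (0:ℝ) ≤ lam := le_trans zero_le_one hlam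
    have h4 : lam * |c * b - t| ≤ lam * θt (dist (γ a) (η b)) :=
      mul_le_mul_of_nonneg_left (habs.trans h3) hlam0
    have hE0 : (0:ℝ) ≤ E := le_trans zero_le_one hE
    have hk : k₁ ≤ E * k₁ := le_mul_of_one_le_left hk₁ hE
    have hθE : lam * θt (dist (γ a) (η b)) ≤ E * (lam * θt (dist (γ a) (η b))) :=
      le_mul_of_one_le_left (mul_nonneg hlam0 hθ) hE
    have hcd : c * E * dist (γ a) (η b) ≤ E * dist (γ a) (η b) := by
      have := mul_le_mul_of_nonneg_right hcmem.2 (mul_nonneg hE0 hd)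
      nlinarith
    linarith
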